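/- (S-procedure for the trust-region problem) Let Q be a positive semidefinite n×n real matrix, v ∈ ℝⁿ. Then max over η in the closed Euclidean unit ball of η^⊤Qη + 2v^⊤η equals inf over λ > λ̄(Q) of λ + v^⊤(λI_n − Q)^{-1}v, where λ̄(Q) is the largest eigenvalue of Q. -/
import Mathlib


open Matrix Finset

theorem diag_sProc {n : ℕ} [Nonempty (Fin n)] (d w : Fin n → ℝ) (hd : ∀ i, 0 ≤ d i) :
    sSup {r : ℝ | ∃ ξ : Fin n → ℝ, (∑ i, ξ i ^ 2) ≤ 1 ∧
        r = (∑ i, d i * ξ i ^ 2) + 2 * ∑ i, w i * ξ i} =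
      ⨅ l : {l : ℝ // (⨆ i, d i) < l}, (l : ℝ) + ∑ i, w i ^ 2 / ((l : ℝ) - d i) := by
  set T := ⨆ i, d i with hT
  have hdT : ∀ i, d i ≤ T := fun i => le_ciSup (Set.Finite.bddAbove (Set.finite_range d)) i
  have hT0 : 0 ≤ T := le_trans (hd (Classical.arbitrary _)) (hdT _)
  set S := {r : ℝ | ∃ ξ : Fin n → ℝ, (∑ i, ξ i ^ 2) ≤ 1 ∧
        r = (∑ i, d i * ξ i ^ 2) + 2 * ∑ i, w i * ξ i} with hS
  set f : ℝ → ℝ := fun l => l + ∑ i, w i ^ 2 / (l - d i) with hf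
  -- key algebraic identity
  have key : ∀ l, T < l → ∀ ξ : Fin n → ℝ, f l =
      ((∑ i, d i * ξ i ^ 2) + 2 * ∑ i, w i * ξ i) +
        (l * (1 - ∑ i, ξ i ^ 2) + ∑ i, (l - d i) * (ξ i - w i / (l - d i)) ^ 2) := by
    intro l hl ξ
    have hsum : ∑ i, (l - d i) * (ξ i - w i / (l - d i)) ^ 2
        = (∑ i, w i ^ 2 / (l - d i)) - (∑ i, d i * ξ i ^ 2) - 2 * (∑ i, w i * ξ i)
          + l * (∑ i, ξ i ^ 2) := by
      rw [Finset.mul_sum, Finset.mul_sum, ← Finset.sum_sub_distrib, ← Finset.sum_sub_distrib,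
        ← Finset.sum_add_distrib]
      refine Finset.sum_congr rfl fun i _ => ?_
      have h : l - d i ≠ 0 := ne_of_gt (by linarith [hdT i])
      field_simp
      ring
    simp only [hf]
    linarith [hsum]
  have weak : ∀ l, T < l → ∀ r ∈ S, r ≤ f l := by
    rintro l hl r ⟨ξ, hξ, rfl⟩
    have hk := key l hl ξ
    have h1 : 0 ≤ l * (1 - ∑ i, ξ i ^ 2) :=
      mul_nonneg (by linarith) (by linarith)
    have h2 : 0 ≤ ∑ i, (l - d i) * (ξ i - w i / (l - d i)) ^ 2 :=
      Finset.sum_nonneg fun i _ => mul_nonneg (by linarith [hdT i]) (sq_nonneg _)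
    rw [hk]
    exact le_add_of_nonneg_right (add_nonneg h1 h2)
  have hne : S.Nonempty := ⟨0, 0, by simp⟩
  have hbdd : BddAbove S := ⟨f (T + 1), fun r hr => weak (T + 1) (by linarith) r hr⟩
  haveI : Nonempty {l : ℝ // T < l} := ⟨⟨T + 1, by linarith⟩⟩
  have ibdd : BddBelow (Set.range fun l : {l : ℝ // T < l} => (l : ℝ) + ∑ i, w i ^ 2 / ((l : ℝ) - d i)) := by
    refine ⟨sSup S, ?_⟩
    rintro _ ⟨l, rfl⟩
    exact csSup_le hne fun r hr => weak l l.2 r hr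
  refine le_antisymm (le_ciInf fun l => csSup_le hne fun r hr => weak l l.2 r hr) ?_
  set g : ℝ → ℝ := fun l => ∑ i, w i ^ 2 / (l - d i) ^ 2 with hg
  by_cases hcase : ∃ l, T < l ∧ 1 ≤ g l
  · -- Case A : there is l with g l ≥ 1; use IVT to find g = 1
    obtain ⟨l₀, hl₀, hg₀⟩ := hcase
    set W := ∑ i, w i ^ 2 with hW
    have hW0 : 0 ≤ W := Finset.sum_nonneg fun i _ => sq_nonneg _
    set l₁ := max l₀ (T + W + 1) with hl₁
    have hl₀₁ : l₀ ≤ l₁ := le_max_left _ _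
    have hl₁T : T + W + 1 ≤ l₁ := le_max_right _ _
    have hgl₁ : g l₁ < 1 := by
      have hstep : g l₁ ≤ W / (l₁ - T) ^ 2 := by
        rw [hg, hW, Finset.sum_div]
        refine Finset.sum_le_sum fun i _ => ?_
        have h1 : (0:ℝ) < l₁ - T := by linarith
        have h2 : l₁ - T ≤ l₁ - d i := by linarith [hdT i]
        exact div_le_div_of_nonneg_left (sq_nonneg _) (by positivity) (by nlinarith)
      have h2 : W + 1 ≤ (l₁ - T) ^ 2 := by nlinarith
      have h3 : W / (l₁ - T) ^ 2 < 1 := by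
        rw [div_lt_one (by nlinarith)]
        linarith
      linarith
    have hco : ContinuousOn g (Set.Icc l₀ l₁) := by
      apply continuousOn_finset_sum
      intro i _
      apply ContinuousOn.div continuousOn_const
      · exact ((continuous_id.sub continuous_const).pow 2).continuousOn
      · intro x hx
        have : (0:ℝ) < x - d i := by
          have := hx.1; have := hdT i; linarith
        positivity
    obtain ⟨ls, hmem, hgs⟩ := intermediate_value_Icc' hl₀₁ hco ⟨le_of_lt hgl₁, hg₀⟩
    have hlsT : T < ls := lt_of_lt_of_le hl₀ hmem.1
    set ξ : Fin n → ℝ := fun i => w i / (ls - d i) with hxi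
    have hfeas : (∑ i, ξ i ^ 2) = 1 := by
      rw [← hgs, hg]
      exact Finset.sum_congr rfl fun i _ => by rw [hxi, div_pow]
    have hfq : f ls = (∑ i, d i * ξ i ^ 2) + 2 * ∑ i, w i * ξ i := by
      have hk := key ls hlsT ξ
      have hz : ∀ i ∈ Finset.univ, (ls - d i) * (ξ i - w i / (ls - d i)) ^ 2 = (0:ℝ) := by
        intro i _
        rw [hxi]
        simp
      rw [Finset.sum_congr rfl hz, Finset.sum_const_zero, hfeas] at hk
      rw [hk]
      ring
    calc (⨅ l : {l : ℝ // T < l}, (l : ℝ) + ∑ i, w i ^ 2 / ((l : ℝ) - d i))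
        ≤ f ls := ciInf_le ibdd ⟨ls, hlsT⟩
      _ = _ := hfq
      _ ≤ sSup S := le_csSup hbdd ⟨ξ, le_of_eq hfeas, rfl⟩
  · push_neg at hcase
    -- Case B : g l < 1 for every l > T
    have hw : ∀ i, d i = T → w i = 0 := by
      intro i hi
      by_contra hwi
      have habs : 0 < |w i| := abs_pos.mpr hwi
      set l := T + |w i| / 2 with hl
      have hlT : T < l := by simp only [hl]; linarith
      have hterm : (4:ℝ) ≤ w i ^ 2 / (l - d i) ^ 2 := by
        have : l - d i = |w i| / 2 := by rw [hl, hi]; ring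
        rw [this]
        rw [le_div_iff₀ (by positivity)]
        have : |w i| ^ 2 = w i ^ 2 := sq_abs _
        nlinarith
      have hle : w i ^ 2 / (l - d i) ^ 2 ≤ g l :=
        Finset.single_le_sum (f := fun j => w j ^ 2 / (l - d j) ^ 2)
          (fun j _ => by positivity) (Finset.mem_univ i)
      have := hcase l hlT
      linarith
    obtain ⟨i₀, hi₀max⟩ := Finite.exists_max d
    have hdi₀ : d i₀ = T := le_antisymm (hdT i₀) (ciSup_le hi₀max)
    have hwi₀ : w i₀ = 0 := hw i₀ hdi₀
    set s := ∑ i, w i ^ 2 / (T - d i) ^ 2 with hs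
    have hs0 : 0 ≤ s := Finset.sum_nonneg fun i _ => by positivity
    -- continuity of the relevant sums at T
    have hcont : ∀ p : ℕ, ContinuousAt (fun l : ℝ => ∑ i, w i ^ 2 / (l - d i) ^ p) T := by
      intro p
      refine tendsto_finset_sum _ fun i _ => ?_
      rcases eq_or_ne (d i) T with h | h
      · rw [hw i h]
        simpa using tendsto_const_nhds
      · exact ContinuousAt.div continuousAt_const
          (((continuous_id.sub continuous_const).pow p).continuousAt)
          (pow_ne_zero p (sub_ne_zero_of_ne (Ne.symm h)))
    have hs1 : s ≤ 1 := by
      by_contra hgt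
      push_neg at hgt
      have h2 : ContinuousAt (fun l : ℝ => ∑ i, w i ^ 2 / (l - d i) ^ 2) T := hcont 2
      have hev : ∀ᶠ l in nhds T, 1 < ∑ i, w i ^ 2 / (l - d i) ^ 2 :=
        Filter.Tendsto.eventually_const_lt (show (1:ℝ) < ∑ i, w i ^ 2 / (T - d i) ^ 2 by
          rw [← hs]; exact hgt) h2
      have hev' : ∀ᶠ l in nhdsWithin T (Set.Ioi T),
          1 < ∑ i, w i ^ 2 / (l - d i) ^ 2 ∧ T < l :=
        (hev.filter_mono nhdsWithin_le_nhds).and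
          (eventually_mem_nhdsWithin.mono fun l hl => hl)
      obtain ⟨l, hl1, hlT⟩ := hev'.exists
      exact absurd (hcase l hlT) (by rw [hg]; linarith)
    -- construct the optimal ξ
    set t := Real.sqrt (1 - s) with htdef
    have ht2 : t ^ 2 = 1 - s := Real.sq_sqrt (by linarith)
    set ξ : Fin n → ℝ := fun i => if i = i₀ then t else w i / (T - d i) with hxi
    have hterm : ∀ i, d i * ξ i ^ 2 + 2 * (w i * ξ i)
        = (w i ^ 2 / (T - d i) + T * (w i ^ 2 / (T - d i) ^ 2))
          + (if i = i₀ then T * (1 - s) + T * (w i ^ 2 / (T - d i) ^ 2) else 0) := by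
      intro i
      rcases eq_or_ne i i₀ with h | h
      · subst h
        have hx : ξ i = t := by rw [hxi]; simp
        rw [hx, hwi₀, hdi₀, if_pos rfl, ht2]
        simp
      · rw [hxi]
        simp only [if_neg h]
        rcases eq_or_ne (d i) T with hdi | hdi
        · rw [hw i hdi]
          simp
        · have hne : T - d i ≠ 0 := sub_ne_zero_of_ne (Ne.symm hdi)
          field_simp
          ring
    have hterm2 : ∀ i, ξ i ^ 2
        = w i ^ 2 / (T - d i) ^ 2 + (if i = i₀ then 1 - s - w i ^ 2 / (T - d i) ^ 2 else 0) := by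
      intro i
      rcases eq_or_ne i i₀ with h | h
      · subst h
        have hx : ξ i = t := by rw [hxi]; simp
        rw [hx, hwi₀, if_pos rfl, ht2]
        simp
      · rw [hxi]
        simp only [if_neg h, div_pow, add_zero]
    have hfeas : (∑ i, ξ i ^ 2) = 1 := by
      have : ∑ i, ξ i ^ 2 = s + (1 - s - w i₀ ^ 2 / (T - d i₀) ^ 2) := by
        rw [Finset.sum_congr rfl fun i _ => hterm2 i, Finset.sum_add_distrib, ← hs,
          Finset.sum_ite_eq' Finset.univ i₀]
        simp
      rw [this, hwi₀]
      simp
    have hqval : (∑ i, d i * ξ i ^ 2) + 2 * ∑ i, w i * ξ i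
        = T + ∑ i, w i ^ 2 / (T - d i) := by
      have h1 : (∑ i, d i * ξ i ^ 2) + 2 * ∑ i, w i * ξ i
          = ∑ i, (d i * ξ i ^ 2 + 2 * (w i * ξ i)) := by
        rw [Finset.sum_add_distrib, Finset.mul_sum]
      rw [h1, Finset.sum_congr rfl fun i _ => hterm i, Finset.sum_add_distrib,
        Finset.sum_add_distrib, Finset.sum_ite_eq' Finset.univ i₀, ← Finset.mul_sum, ← hs]
      rw [if_pos (Finset.mem_univ i₀), hwi₀]
      have hz : (0:ℝ) ^ 2 / (T - d i₀) ^ 2 = 0 := by simp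
      rw [hz]
      ring
    have hLS : T + (∑ i, w i ^ 2 / (T - d i)) ≤ sSup S :=
      le_csSup hbdd ⟨ξ, le_of_eq hfeas, hqval.symm⟩
    -- conclude by continuity of f at T
    refine le_of_forall_pos_le_add fun ε hε => ?_
    have hfc : ContinuousAt (fun l : ℝ => l + ∑ i, w i ^ 2 / (l - d i) ^ 1) T :=
      continuousAt_id.add (hcont 1)
    have hev : ∀ᶠ l in nhds T,
        l + (∑ i, w i ^ 2 / (l - d i) ^ 1) < T + (∑ i, w i ^ 2 / (T - d i) ^ 1) + ε :=
      Filter.Tendsto.eventually_lt_const (by linarith) hfc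
    have hev' : ∀ᶠ l in nhdsWithin T (Set.Ioi T),
        (l + (∑ i, w i ^ 2 / (l - d i) ^ 1) < T + (∑ i, w i ^ 2 / (T - d i) ^ 1) + ε) ∧ T < l :=
      (hev.filter_mono nhdsWithin_le_nhds).and (eventually_mem_nhdsWithin.mono fun l hl => hl)
    obtain ⟨l, hl1, hlT⟩ := hev'.exists
    have hpw : ∀ (a : ℝ), (∑ i, w i ^ 2 / (a - d i) ^ 1) = ∑ i, w i ^ 2 / (a - d i) := by
      intro a
      exact Finset.sum_congr rfl fun i _ => by rw [pow_one]
    calc (⨅ l : {l : ℝ // T < l}, (l : ℝ) + ∑ i, w i ^ 2 / ((l : ℝ) - d i))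
        ≤ l + ∑ i, w i ^ 2 / (l - d i) := ciInf_le ibdd ⟨l, hlT⟩
      _ ≤ T + (∑ i, w i ^ 2 / (T - d i)) + ε := by
          rw [← hpw l, ← hpw T]
          linarith
      _ ≤ sSup S + ε := by linarith

/-- S-procedure for the trust-region problem: for `Q ⪰ 0` and `v ∈ ℝⁿ`,
the maximum over the closed Euclidean unit ball of `η^⊤Qη + 2v^⊤η` equals
`inf_{λ > λ̄(Q)} (λ + v^⊤(λI − Q)⁻¹v)`, where `λ̄(Q)` is the largest eigenvalue of `Q`. -/
theorem stmt5 {n : ℕ} (Q : Matrix (Fin n) (Fin n) ℝ) (hQ : Q.PosSemidef) (v : Fin n → ℝ) :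
    sSup {r : ℝ | ∃ η : Fin n → ℝ, η ⬝ᵥ η ≤ 1 ∧ r = η ⬝ᵥ (Q *ᵥ η) + 2 * (v ⬝ᵥ η)} =
      ⨅ l : {l : ℝ // (⨆ i, hQ.1.eigenvalues i) < l},
        (l : ℝ) + v ⬝ᵥ (((l : ℝ) • (1 : Matrix (Fin n) (Fin n) ℝ) - Q)⁻¹ *ᵥ v) := by
  rcases Nat.eq_zero_or_pos n with hn | hn
  · subst hn
    have hset : {r : ℝ | ∃ η : Fin 0 → ℝ, η ⬝ᵥ η ≤ 1 ∧ r = η ⬝ᵥ (Q *ᵥ η) + 2 * (v ⬝ᵥ η)}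
        = {0} := by
      ext r
      simp [dotProduct]
    have hT : (⨆ i : Fin 0, hQ.1.eigenvalues i) = 0 := Real.iSup_of_isEmpty _
    rw [hset, csSup_singleton]
    haveI : Nonempty {l : ℝ // (⨆ i : Fin 0, hQ.1.eigenvalues i) < l} :=
      ⟨⟨(⨆ i : Fin 0, hQ.1.eigenvalues i) + 1, lt_add_one _⟩⟩
    have h1 : (⨅ l : {l : ℝ // (⨆ i : Fin 0, hQ.1.eigenvalues i) < l},
        ((l : ℝ) + v ⬝ᵥ (((l : ℝ) • (1 : Matrix (Fin 0) (Fin 0) ℝ) - Q)⁻¹ *ᵥ v)))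
        = ⨅ l : {l : ℝ // (⨆ i : Fin 0, hQ.1.eigenvalues i) < l}, (l : ℝ) :=
      iInf_congr fun l => by simp [dotProduct]
    rw [h1]
    have hbdd : BddBelow (Set.range fun l : {l : ℝ // (⨆ i : Fin 0, hQ.1.eigenvalues i) < l}
        => (l : ℝ)) := by
      refine ⟨0, ?_⟩
      rintro _ ⟨l, rfl⟩
      have h2 := l.2
      have : (0:ℝ) < (l : ℝ) := by linarith [hT, h2]
      exact le_of_lt this
    refine le_antisymm (le_ciInf fun l => ?_) ?_
    · have h2 := l.2
      have : (0:ℝ) < (l : ℝ) := by linarith [hT, h2]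
      exact le_of_lt this
    · refine le_of_forall_pos_le_add fun ε hε => ?_
      have := ciInf_le hbdd ⟨ε, by rw [hT]; exact hε⟩
      simpa using this
  · haveI : Nonempty (Fin n) := Fin.pos_iff_nonempty.mp hn
    have hH : Q.IsHermitian := hQ.1
    set d : Fin n → ℝ := hQ.1.eigenvalues with hd
    set U : Matrix (Fin n) (Fin n) ℝ := (hQ.1.eigenvectorUnitary : Matrix (Fin n) (Fin n) ℝ)
      with hU
    have hstar : star U = Uᵀ := by
      ext i j
      simp [Matrix.conjTranspose_apply]
    have hUUT : U * Uᵀ = 1 := by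
      rw [← hstar]
      exact (Matrix.mem_unitaryGroup_iff).mp (hQ.1.eigenvectorUnitary).2
    have hUTU : Uᵀ * U = 1 := by
      rw [← hstar]
      exact (Matrix.mem_unitaryGroup_iff').mp (hQ.1.eigenvectorUnitary).2
    have hspec : Q = U * Matrix.diagonal d * Uᵀ := by
      rw [← hstar, hU, hd]
      simpa using hQ.1.spectral_theorem
    have hdotU : ∀ z y : Fin n → ℝ, z ⬝ᵥ (U *ᵥ y) = (Uᵀ *ᵥ z) ⬝ᵥ y := fun z y => by
      rw [Matrix.dotProduct_mulVec, Matrix.mulVec_transpose]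
    have hdotUT : ∀ z y : Fin n → ℝ, z ⬝ᵥ (Uᵀ *ᵥ y) = (U *ᵥ z) ⬝ᵥ y := fun z y => by
      rw [Matrix.dotProduct_mulVec, Matrix.vecMul_transpose]
    set w : Fin n → ℝ := Uᵀ *ᵥ v with hw
    have hUUTv : ∀ y : Fin n → ℝ, U *ᵥ (Uᵀ *ᵥ y) = y := fun y => by
      rw [Matrix.mulVec_mulVec, hUUT, Matrix.one_mulVec]
    have hUTUv : ∀ y : Fin n → ℝ, Uᵀ *ᵥ (U *ᵥ y) = y := fun y => by
      rw [Matrix.mulVec_mulVec, hUTU, Matrix.one_mulVec]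
    -- quadratic form in eigencoordinates
    have hQform : ∀ η : Fin n → ℝ, η ⬝ᵥ (Q *ᵥ η) = ∑ i, d i * (Uᵀ *ᵥ η) i ^ 2 := by
      intro η
      conv_lhs => rw [hspec]
      rw [show (U * Matrix.diagonal d * Uᵀ) *ᵥ η = U *ᵥ (Matrix.diagonal d *ᵥ (Uᵀ *ᵥ η)) by
        rw [Matrix.mulVec_mulVec, Matrix.mulVec_mulVec]]
      rw [hdotU]
      unfold dotProduct
      refine Finset.sum_congr rfl fun i _ => ?_
      rw [Matrix.mulVec_diagonal]
      ring
    have hvform : ∀ η : Fin n → ℝ, v ⬝ᵥ η = ∑ i, w i * (Uᵀ *ᵥ η) i := by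
      intro η
      conv_lhs => rw [← hUUTv η]
      rw [hdotU]
      rfl
    have hnorm : ∀ η : Fin n → ℝ, (∑ i, (Uᵀ *ᵥ η) i ^ 2) = η ⬝ᵥ η := by
      intro η
      have : (∑ i, (Uᵀ *ᵥ η) i ^ 2) = (Uᵀ *ᵥ η) ⬝ᵥ (Uᵀ *ᵥ η) := by
        unfold dotProduct
        exact Finset.sum_congr rfl fun i _ => (sq ((Uᵀ *ᵥ η) i))
      rw [this, hdotUT, hUUTv]
    have hset : {r : ℝ | ∃ η : Fin n → ℝ, η ⬝ᵥ η ≤ 1 ∧ r = η ⬝ᵥ (Q *ᵥ η) + 2 * (v ⬝ᵥ η)}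
        = {r : ℝ | ∃ ξ : Fin n → ℝ, (∑ i, ξ i ^ 2) ≤ 1 ∧
            r = (∑ i, d i * ξ i ^ 2) + 2 * ∑ i, w i * ξ i} := by
      ext r
      constructor
      · rintro ⟨η, hη, rfl⟩
        exact ⟨Uᵀ *ᵥ η, by rw [hnorm]; exact hη, by rw [hQform, hvform]⟩
      · rintro ⟨ξ, hξ, rfl⟩
        refine ⟨U *ᵥ ξ, ?_, ?_⟩
        · rw [← hnorm (U *ᵥ ξ), hUTUv]; exact hξ
        · rw [hQform, hvform, hUTUv]
    -- resolvent in eigencoordinates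
    have hdT : ∀ i, d i ≤ (⨆ i, d i) := fun i =>
      le_ciSup (Set.Finite.bddAbove (Set.finite_range d)) i
    have hRHS : ∀ ll : {l : ℝ // (⨆ i, d i) < l},
        (ll : ℝ) + v ⬝ᵥ (((ll : ℝ) • (1 : Matrix (Fin n) (Fin n) ℝ) - Q)⁻¹ *ᵥ v)
          = (ll : ℝ) + ∑ i, w i ^ 2 / ((ll : ℝ) - d i) := by
      rintro ⟨l, hl⟩
      simp only
      have hld : ∀ i, l - d i ≠ 0 := fun i => ne_of_gt (by linarith [hdT i])
      have hM : l • (1 : Matrix (Fin n) (Fin n) ℝ) - Q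
          = U * Matrix.diagonal (fun i => l - d i) * Uᵀ := by
        have h0 : Matrix.diagonal (fun i => l - d i)
            = l • (1 : Matrix (Fin n) (Fin n) ℝ) - Matrix.diagonal d := by
          rw [Matrix.smul_one_eq_diagonal, ← Matrix.diagonal_sub]
        rw [h0, Matrix.mul_sub, Matrix.sub_mul, ← hspec]
        congr 1
        rw [mul_smul_comm, Matrix.smul_mul, mul_one, hUUT]
      have hInv : (l • (1 : Matrix (Fin n) (Fin n) ℝ) - Q)⁻¹
          = U * Matrix.diagonal (fun i => (l - d i)⁻¹) * Uᵀ := by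
        apply Matrix.inv_eq_right_inv
        rw [hM]
        have h1 : Uᵀ * (U * Matrix.diagonal (fun i => (l - d i)⁻¹) * Uᵀ)
            = Matrix.diagonal (fun i => (l - d i)⁻¹) * Uᵀ := by
          rw [← Matrix.mul_assoc, ← Matrix.mul_assoc, hUTU, one_mul]
        rw [Matrix.mul_assoc (U * Matrix.diagonal fun i => l - d i), h1,
          Matrix.mul_assoc U, ← Matrix.mul_assoc (Matrix.diagonal fun i => l - d i),
          Matrix.diagonal_mul_diagonal]
        have h2 : (fun i => (l - d i) * (l - d i)⁻¹) = fun _ => (1:ℝ) :=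
          funext fun i => mul_inv_cancel₀ (hld i)
        rw [h2, Matrix.diagonal_one, one_mul, hUUT]
      rw [hInv]
      congr 1
      rw [show (U * Matrix.diagonal (fun i => (l - d i)⁻¹) * Uᵀ) *ᵥ v
          = U *ᵥ (Matrix.diagonal (fun i => (l - d i)⁻¹) *ᵥ (Uᵀ *ᵥ v)) by
        rw [Matrix.mulVec_mulVec, Matrix.mulVec_mulVec]]
      rw [hdotU]
      unfold dotProduct
      refine Finset.sum_congr rfl fun i _ => ?_
      rw [Matrix.mulVec_diagonal]
      rw [div_eq_mul_inv]
      ring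
    rw [hset, iInf_congr hRHS]
    exact diag_sProc d w fun i => hQ.eigenvalues_nonneg i
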